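/- If (U, R, 𝓕) is a topological sL-approximation space (respectively, a topological L-approximation space), then (𝔠(U, R, 𝓕), ⊆) is an algebraic domain that is an sL-domain (respectively, an algebraic domain that is an L-domain). -/

import Mathlib

open Set

/-- The upper approximation operator: `upp R A = {x | ∃ y ∈ A, x R y}`. -/
def upp {U : Type*} (R : U → U → Prop) (A : Set U) : Set U := {x | ∃ y ∈ A, R x y}

/-- `(U, R, 𝓕)` is a CF-approximation space. -/
def IsCFApprox {U : Type*} (R : U → U → Prop) (𝓕 : Set (Set U)) : Prop :=
  Transitive R ∧ 𝓕.Nonempty ∧ (∀ F ∈ 𝓕, F.Finite) ∧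
    ∀ F ∈ 𝓕, ∀ K : Set U, K.Finite → K ⊆ upp R F →
      ∃ G ∈ 𝓕, K ⊆ upp R G ∧ G ⊆ upp R F

/-- `E` is a CF-closed set of `(U, R, 𝓕)`. -/
def CFClosed {U : Type*} (R : U → U → Prop) (𝓕 : Set (Set U)) (E : Set U) : Prop :=
  ∀ K : Set U, K.Finite → K ⊆ E →
    ∃ F ∈ 𝓕, K ⊆ upp R F ∧ upp R F ⊆ E ∧ F ⊆ E

/-- The join saturation `𝓕^♯`: all unions of nonempty finite subfamilies of `𝓕`. -/
def joinSat {U : Type*} (𝓕 : Set (Set U)) : Set (Set U) :=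
  {A | ∃ 𝓐 : Set (Set U), 𝓐 ⊆ 𝓕 ∧ 𝓐.Finite ∧ 𝓐.Nonempty ∧ A = ⋃₀ 𝓐}

/-- `S(M, F)`: the set of `G ∈ 𝓕` satisfying (sL-1) and (sL-2). -/
def SFam {U : Type*} (R : U → U → Prop) (𝓕 : Set (Set U)) (M F : Set U) : Set (Set U) :=
  {G | G ∈ 𝓕 ∧ upp R M ⊆ upp R G ∧ upp R G ⊆ upp R F ∧
    ∀ G' ∈ 𝓕, upp R M ⊆ upp R G' → upp R G' ⊆ upp R F → upp R G ⊆ upp R G'}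

/-- `S*(M, F) = {G ∈ S(M, F) | G ⊆ upp R F}`. -/
def SStar {U : Type*} (R : U → U → Prop) (𝓕 : Set (Set U)) (M F : Set U) : Set (Set U) :=
  {G | G ∈ SFam R 𝓕 M F ∧ G ⊆ upp R F}

/-- sL-approximation space. -/
def IsSLApprox {U : Type*} (R : U → U → Prop) (𝓕 : Set (Set U)) : Prop :=
  IsCFApprox R 𝓕 ∧
    ∀ M ∈ joinSat 𝓕, ∀ F ∈ 𝓕, M ⊆ upp R F → (SFam R 𝓕 M F).Nonempty

/-- L-approximation space. -/
def IsLApprox {U : Type*} (R : U → U → Prop) (𝓕 : Set (Set U)) : Prop :=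
  IsCFApprox R 𝓕 ∧
    ∀ M ∈ joinSat 𝓕 ∪ {(∅ : Set U)}, ∀ F ∈ 𝓕, M ⊆ upp R F → (SFam R 𝓕 M F).Nonempty

/-- bc-approximation space. -/
def IsBCApprox {U : Type*} (R : U → U → Prop) (𝓕 : Set (Set U)) : Prop :=
  IsCFApprox R 𝓕 ∧
    ∀ M ∈ joinSat 𝓕 ∪ {(∅ : Set U)}, ∀ F ∈ 𝓕, M ⊆ upp R F →
      ∃ G ∈ 𝓕, upp R M ⊆ upp R G ∧ upp R G ⊆ upp R F ∧
        ∀ G' ∈ 𝓕, upp R M ⊆ upp R G' → upp R G ⊆ upp R G'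

/-- A dcpo: every (nonempty) directed subset has a supremum. -/
def IsDcpo (P : Type*) [PartialOrder P] : Prop :=
  ∀ D : Set P, D.Nonempty → DirectedOn (· ≤ ·) D → ∃ s, IsLUB D s

/-- The way-below relation `x ≪ y`. -/
def WayBelow {P : Type*} [PartialOrder P] (x y : P) : Prop :=
  ∀ D : Set P, D.Nonempty → DirectedOn (· ≤ ·) D →
    ∀ s, IsLUB D s → y ≤ s → ∃ d ∈ D, x ≤ d

/-- Continuous domain: a dcpo in which for every `x` the set `{z | z ≪ x}` is
directed with supremum `x`. -/
def IsContinuousDomain (P : Type*) [PartialOrder P] : Prop :=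
  IsDcpo P ∧ ∀ x : P, {z | WayBelow z x}.Nonempty ∧
    DirectedOn (· ≤ ·) {z | WayBelow z x} ∧ IsLUB {z | WayBelow z x} x

/-- Algebraic domain: a dcpo in which for every `x` the set `↓x ∩ K(P)` is
directed with supremum `x`. -/
def IsAlgebraicDomain (P : Type*) [PartialOrder P] : Prop :=
  IsDcpo P ∧ ∀ x : P, ({k | k ≤ x ∧ WayBelow k k}).Nonempty ∧
    DirectedOn (· ≤ ·) {k | k ≤ x ∧ WayBelow k k} ∧
    IsLUB {k | k ≤ x ∧ WayBelow k k} x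

/-- sL-domain: a continuous domain in which every principal ideal is a
sup-semilattice. -/
def IsSLDomain (P : Type*) [PartialOrder P] : Prop :=
  IsContinuousDomain P ∧ ∀ x a b : P, a ≤ x → b ≤ x →
    ∃ s, s ≤ x ∧ a ≤ s ∧ b ≤ s ∧ ∀ t, t ≤ x → a ≤ t → b ≤ t → s ≤ t

/-- L-domain: a continuous domain in which every principal ideal is a
complete lattice (every subset of `↓x` has a least upper bound in `↓x`). -/
def IsLDomain (P : Type*) [PartialOrder P] : Prop :=
  IsContinuousDomain P ∧ ∀ (x : P) (A : Set P), (∀ a ∈ A, a ≤ x) →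
    ∃ s, s ≤ x ∧ (∀ a ∈ A, a ≤ s) ∧ ∀ t, t ≤ x → (∀ a ∈ A, a ≤ t) → s ≤ t

/-- bc-domain: a continuous domain in which every up-bounded subset has a
supremum. -/
def IsBCDomain (P : Type*) [PartialOrder P] : Prop :=
  IsContinuousDomain P ∧ ∀ A : Set P, (∃ b, ∀ a ∈ A, a ≤ b) → ∃ s, IsLUB A s

section Aux
variable {U : Type*} {R : U → U → Prop} {𝓕 : Set (Set U)}

lemma upp_mono {A B : Set U} (h : A ⊆ B) : upp R A ⊆ upp R B := by
  rintro x ⟨y, hy, hr⟩; exact ⟨y, h hy, hr⟩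

lemma subset_upp (hrefl : Reflexive R) (A : Set U) : A ⊆ upp R A :=
  fun x hx => ⟨x, hx, hrefl x⟩

lemma upp_subset_upp (htrans : Transitive R) {A B : Set U} (h : A ⊆ upp R B) :
    upp R A ⊆ upp R B := by
  rintro x ⟨y, hy, hr⟩
  obtain ⟨z, hz, hr'⟩ := h hy
  exact ⟨z, hz, htrans hr hr'⟩

lemma upp_union (A B : Set U) : upp R (A ∪ B) = upp R A ∪ upp R B := by
  ext x; constructor
  · rintro ⟨y, hy | hy, hr⟩
    exacts [Or.inl ⟨y, hy, hr⟩, Or.inr ⟨y, hy, hr⟩]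
  · rintro (⟨y, hy, hr⟩ | ⟨y, hy, hr⟩)
    exacts [⟨y, Or.inl hy, hr⟩, ⟨y, Or.inr hy, hr⟩]

lemma cf_upp (hCF : IsCFApprox R 𝓕) {F : Set U} (hF : F ∈ 𝓕) :
    CFClosed R 𝓕 (upp R F) := by
  intro K hKfin hKsub
  obtain ⟨G, hG, hKG, hGF⟩ := hCF.2.2.2 F hF K hKfin hKsub
  exact ⟨G, hG, hKG, upp_subset_upp hCF.1 hGF, hGF⟩


lemma upp_subset_of_cfclosed (htrans : Transitive R) {E : Set U}
    (hE : CFClosed R 𝓕 E) : upp R E ⊆ E := by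
  rintro x ⟨y, hy, hr⟩
  obtain ⟨F, hF, hyF, hFE, _⟩ := hE {y} (finite_singleton y) (singleton_subset_iff.2 hy)
  obtain ⟨z, hz, hr'⟩ := hyF rfl
  exact hFE ⟨z, hz, htrans hr hr'⟩

lemma sfam_upp_eq (htrans : Transitive R) {M F F' G G' : Set U}
    (hG : G ∈ SFam R 𝓕 M F) (hG' : G' ∈ SFam R 𝓕 M F')
    (hFF' : upp R F ⊆ upp R F') : upp R G = upp R G' := by
  obtain ⟨hGmem, hMG, hGF, hGmin⟩ := hG
  obtain ⟨hG'mem, hMG', hG'F', hG'min⟩ := hG'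
  have h1 : upp R G' ⊆ upp R G := hG'min G hGmem hMG (hGF.trans hFF')
  exact Subset.antisymm (hGmin G' hG'mem hMG' (h1.trans hGF)) h1
end Aux
section Dcpo
variable {U : Type*} {R : U → U → Prop} {𝓕 : Set (Set U)}

lemma cf_le_iff {s t : {E : Set U // CFClosed R 𝓕 E}} : s ≤ t ↔ (s : Set U) ⊆ t :=
  Iff.rfl

lemma finset_subset_directed {D : Set {E : Set U // CFClosed R 𝓕 E}}
    (hne : D.Nonempty) (hdir : DirectedOn (· ≤ ·) D) {K : Set U} (hK : K.Finite)
    (hsub : K ⊆ ⋃ d ∈ D, (d : Set U)) : ∃ d ∈ D, K ⊆ (d : Set U) := by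
  classical
  refine Set.Finite.induction_on
    (motive := fun K _ => K ⊆ (⋃ d ∈ D, (d : Set U)) → ∃ d ∈ D, K ⊆ (d : Set U)) K hK
    (fun _ => ⟨hne.choose, hne.choose_spec, empty_subset _⟩) ?_ hsub
  intro a s _ _ ih hsub'
  obtain ⟨d, hd, hsd⟩ := ih ((subset_insert a s).trans hsub')
  have ha : a ∈ ⋃ d ∈ D, (d : Set U) := hsub' (mem_insert a s)
  obtain ⟨e, he, hae⟩ := mem_iUnion₂.1 ha
  obtain ⟨f, hf, hdf, hef⟩ := hdir d hd e he
  exact ⟨f, hf, insert_subset_iff.2 ⟨hef hae, hsd.trans hdf⟩⟩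

lemma cf_dUnion (hCF : IsCFApprox R 𝓕) {D : Set {E : Set U // CFClosed R 𝓕 E}}
    (hne : D.Nonempty) (hdir : DirectedOn (· ≤ ·) D) :
    CFClosed R 𝓕 (⋃ d ∈ D, (d : Set U)) := by
  intro K hKfin hKsub
  obtain ⟨d, hd, hKd⟩ := finset_subset_directed hne hdir hKfin hKsub
  obtain ⟨F, hF, hKF, hFd, hFd'⟩ := d.2 K hKfin hKd
  have hmem : (d : Set U) ⊆ ⋃ e ∈ D, (e : Set U) := subset_biUnion_of_mem hd
  exact ⟨F, hF, hKF, hFd.trans hmem, hFd'.trans hmem⟩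

lemma cf_isLUB (hCF : IsCFApprox R 𝓕) {D : Set {E : Set U // CFClosed R 𝓕 E}}
    (hne : D.Nonempty) (hdir : DirectedOn (· ≤ ·) D) :
    IsLUB D ⟨⋃ d ∈ D, (d : Set U), cf_dUnion hCF hne hdir⟩ := by
  constructor
  · intro d hd
    intro x hx; exact mem_biUnion hd hx
  · intro t ht
    intro x hx
    obtain ⟨d, hd, hxd⟩ := mem_iUnion₂.1 hx
    exact ht hd hxd

lemma cf_lub_eq_union (hCF : IsCFApprox R 𝓕) {D : Set {E : Set U // CFClosed R 𝓕 E}}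
    (hne : D.Nonempty) (hdir : DirectedOn (· ≤ ·) D)
    {s : {E : Set U // CFClosed R 𝓕 E}} (hs : IsLUB D s) :
    (s : Set U) = ⋃ d ∈ D, (d : Set U) := by
  have h := cf_isLUB hCF hne hdir
  have := hs.unique h
  rw [this]

lemma cf_dcpo (hCF : IsCFApprox R 𝓕) : IsDcpo {E : Set U // CFClosed R 𝓕 E} :=
  fun D hne hdir => ⟨_, cf_isLUB hCF hne hdir⟩

/-- Elements of the form `upp R F`, `F ∈ 𝓕`, are compact. -/
lemma cf_compact (hCF : IsCFApprox R 𝓕) (hrefl : Reflexive R)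
    {k : {E : Set U // CFClosed R 𝓕 E}} {F : Set U} (hF : F ∈ 𝓕)
    (hk : (k : Set U) = upp R F) : WayBelow k k := by
  intro D hne hdir s hs hks
  have hsu : (s : Set U) = ⋃ d ∈ D, (d : Set U) := cf_lub_eq_union hCF hne hdir hs
  have hFk : F ⊆ (k : Set U) := hk ▸ subset_upp hrefl F
  have hFs : F ⊆ ⋃ d ∈ D, (d : Set U) := fun x hx => hsu ▸ hks (hFk hx)
  obtain ⟨d, hd, hFd⟩ := finset_subset_directed hne hdir (hCF.2.2.1 F hF) hFs
  refine ⟨d, hd, ?_⟩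
  rw [cf_le_iff, hk]
  exact (upp_subset_upp hCF.1 (hFd.trans (subset_upp hrefl _))).trans
    (upp_subset_of_cfclosed hCF.1 d.2)
end Dcpo
section Alg
variable {U : Type*} {R : U → U → Prop} {𝓕 : Set (Set U)}

/-- The canonical basis below a CF-closed set. -/
lemma cf_basis (hCF : IsCFApprox R 𝓕) (hrefl : Reflexive R)
    (E : {E : Set U // CFClosed R 𝓕 E}) :
    let B : Set {E : Set U // CFClosed R 𝓕 E} :=
      {j | ∃ F ∈ 𝓕, (j : Set U) = upp R F ∧ upp R F ⊆ (E : Set U) ∧ F ⊆ (E : Set U)}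
    B.Nonempty ∧ DirectedOn (· ≤ ·) B ∧ IsLUB B E := by
  intro B
  have hmk : ∀ {F : Set U} (hF : F ∈ 𝓕), upp R F ⊆ (E : Set U) → F ⊆ (E : Set U) →
      (⟨upp R F, cf_upp hCF hF⟩ : {E : Set U // CFClosed R 𝓕 E}) ∈ B := by
    intro F hF h1 h2
    exact ⟨F, hF, rfl, h1, h2⟩
  refine ⟨?_, ?_, ?_, ?_⟩
  · obtain ⟨F, hF, _, h1, h2⟩ := E.2 ∅ finite_empty (empty_subset _)
    exact ⟨_, hmk hF h1 h2⟩
  · rintro j ⟨F1, hF1, hj1, hu1, hs1⟩ k ⟨F2, hF2, hj2, hu2, hs2⟩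
    obtain ⟨F, hF, hKF, huF, hsF⟩ := E.2 (F1 ∪ F2)
      ((hCF.2.2.1 F1 hF1).union (hCF.2.2.1 F2 hF2)) (union_subset hs1 hs2)
    refine ⟨_, hmk hF huF hsF, ?_, ?_⟩
    · refine cf_le_iff.2 ?_
      rw [hj1]
      exact upp_subset_upp hCF.1 ((subset_union_left).trans hKF)
    · refine cf_le_iff.2 ?_
      rw [hj2]
      exact upp_subset_upp hCF.1 ((subset_union_right).trans hKF)
  · rintro j ⟨F, hF, hj, hu, hs⟩
    rw [cf_le_iff, hj]; exact hu
  · intro t ht x hx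
    obtain ⟨F, hF, hxF, huF, hsF⟩ := E.2 {x} (finite_singleton x)
      (singleton_subset_iff.2 hx)
    exact ht (hmk hF huF hsF) (hxF rfl)

/-- Every compact element is of the form `upp R F`. -/
lemma cf_compact_char (hCF : IsCFApprox R 𝓕) (hrefl : Reflexive R)
    {k : {E : Set U // CFClosed R 𝓕 E}} (hk : WayBelow k k) :
    ∃ F ∈ 𝓕, (k : Set U) = upp R F := by
  obtain ⟨hne, hdir, hlub⟩ := cf_basis hCF hrefl k
  obtain ⟨j, hj, hkj⟩ := hk _ hne hdir k hlub le_rfl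
  obtain ⟨F, hF, hjF, huF, _⟩ := hj
  refine ⟨F, hF, ?_⟩
  have : (j : Set U) ⊆ (k : Set U) := hjF ▸ huF
  exact le_antisymm (hjF ▸ hkj) (hjF ▸ this)

lemma cf_algebraic (hCF : IsCFApprox R 𝓕) (hrefl : Reflexive R) :
    IsAlgebraicDomain {E : Set U // CFClosed R 𝓕 E} := by
  refine ⟨cf_dcpo hCF, fun E => ?_⟩
  obtain ⟨hne, hdir, hlub⟩ := cf_basis hCF hrefl E
  have hsub : {j : {E : Set U // CFClosed R 𝓕 E} |
      ∃ F ∈ 𝓕, (j : Set U) = upp R F ∧ upp R F ⊆ (E : Set U) ∧ F ⊆ (E : Set U)}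
      ⊆ {k | k ≤ E ∧ WayBelow k k} := by
    rintro j ⟨F, hF, hj, hu, _⟩
    exact ⟨cf_le_iff.2 (hj ▸ hu), cf_compact hCF hrefl hF hj⟩
  refine ⟨hne.mono hsub, ?_, ?_⟩
  · rintro a ⟨haE, ha⟩ b ⟨hbE, hb⟩
    obtain ⟨Fa, hFa, hca⟩ := cf_compact_char hCF hrefl ha
    obtain ⟨Fb, hFb, hcb⟩ := cf_compact_char hCF hrefl hb
    have hsa : Fa ⊆ (E : Set U) := (subset_upp hrefl Fa).trans (hca ▸ haE)
    have hsb : Fb ⊆ (E : Set U) := (subset_upp hrefl Fb).trans (hcb ▸ hbE)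
    obtain ⟨F, hF, hKF, huF, hsF⟩ := E.2 (Fa ∪ Fb)
      ((hCF.2.2.1 Fa hFa).union (hCF.2.2.1 Fb hFb)) (union_subset hsa hsb)
    refine ⟨⟨upp R F, cf_upp hCF hF⟩,
      ⟨cf_le_iff.2 huF, cf_compact hCF hrefl hF rfl⟩, ?_, ?_⟩
    · refine cf_le_iff.2 ?_
      rw [hca]
      exact upp_subset_upp hCF.1 ((subset_union_left).trans hKF)
    · refine cf_le_iff.2 ?_
      rw [hcb]
      exact upp_subset_upp hCF.1 ((subset_union_right).trans hKF)
  · constructor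
    · rintro k ⟨hkE, _⟩; exact hkE
    · intro t ht
      exact hlub.2 fun j hj => ht (hsub hj)

lemma cf_wayBelow_le {P : Type*} [PartialOrder P] {z x : P} (h : WayBelow z x) :
    z ≤ x := by
  obtain ⟨d, hd, hzd⟩ := h {x} (singleton_nonempty x)
    (directedOn_singleton x) x isLUB_singleton le_rfl
  rwa [mem_singleton_iff.1 hd] at hzd

lemma alg_continuous {P : Type*} [PartialOrder P] (h : IsAlgebraicDomain P) :
    IsContinuousDomain P := by
  obtain ⟨hd, hx⟩ := h
  refine ⟨hd, fun x => ?_⟩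
  obtain ⟨hne, hdir, hlub⟩ := hx x
  have hsub : {k : P | k ≤ x ∧ WayBelow k k} ⊆ {z | WayBelow z x} := by
    rintro k ⟨hkx, hk⟩ D hDne hDdir s hs hxs
    exact hk D hDne hDdir s hs (hkx.trans hxs)
  refine ⟨hne.mono hsub, ?_, ?_, ?_⟩
  · intro a ha b hb
    obtain ⟨ka, hka, haka⟩ := ha _ hne hdir x hlub le_rfl
    obtain ⟨kb, hkb, hbkb⟩ := hb _ hne hdir x hlub le_rfl
    obtain ⟨k, hk, h1, h2⟩ := hdir ka hka kb hkb
    exact ⟨k, hsub hk, haka.trans h1, hbkb.trans h2⟩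
  · intro z hz; exact cf_wayBelow_le hz
  · intro t ht
    exact hlub.2 fun k hk => ht (hsub hk)
end Alg
section Sup
variable {U : Type*} {R : U → U → Prop} {𝓕 : Set (Set U)}

/-- Key construction of suprema in principal ideals of `𝔠(U,R,𝓕)`. -/
lemma cf_sup_construction (hCF : IsCFApprox R 𝓕) (hrefl : Reflexive R)
    {E : Set U} (hE : CFClosed R 𝓕 E) (𝒜 : Set (Set U)) (h𝒜E : ∀ A ∈ 𝒜, A ⊆ E)
    (P : Set U → Prop)
    (hP1 : ∀ M, P M → M.Finite ∧ M ⊆ ⋃₀ 𝒜)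
    (hP2 : ∃ M, P M)
    (hP3 : ∀ M M', P M → P M' → ∃ M'', P M'' ∧ upp R M ⊆ upp R M'' ∧ upp R M' ⊆ upp R M'')
    (hP4 : ∀ A ∈ 𝒜, ∀ x ∈ A, ∃ M, P M ∧ x ∈ upp R M)
    (hP5 : ∀ M, P M → ∀ F ∈ 𝓕, M ⊆ upp R F → (SFam R 𝓕 M F).Nonempty) :
    ∃ s : Set U, CFClosed R 𝓕 s ∧ s ⊆ E ∧ (∀ A ∈ 𝒜, A ⊆ s) ∧
      (∀ T, CFClosed R 𝓕 T → T ⊆ E → (∀ A ∈ 𝒜, A ⊆ T) → s ⊆ T) := by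
  classical
  have htrans : Transitive R := hCF.1
  have h𝒜E' : ⋃₀ 𝒜 ⊆ E := sUnion_subset h𝒜E
  -- the candidate supremum
  set s : Set U := {x | ∃ M F G, P M ∧ F ∈ 𝓕 ∧ M ⊆ upp R F ∧ upp R F ⊆ E ∧ F ⊆ E ∧
    G ∈ SFam R 𝓕 M F ∧ x ∈ upp R G} with hs_def
  -- a generic way to produce a constituent from an allowed `M`
  have hconstit : ∀ M, P M → ∃ F G, F ∈ 𝓕 ∧ M ⊆ upp R F ∧ upp R F ⊆ E ∧ F ⊆ E ∧
      G ∈ SFam R 𝓕 M F := by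
    intro M hM
    obtain ⟨hMfin, hMsub⟩ := hP1 M hM
    obtain ⟨F, hF, hMF, huFE, hFE⟩ := hE M hMfin (hMsub.trans h𝒜E')
    obtain ⟨G, hG⟩ := hP5 M hM F hF hMF
    exact ⟨F, G, hF, hMF, huFE, hFE, hG⟩
  have hsE : s ⊆ E := by
    rintro x ⟨M, F, G, _, _, _, huFE, _, hG, hxG⟩
    exact huFE (hG.2.2.1 hxG)
  have h𝒜s : ∀ A ∈ 𝒜, A ⊆ s := by
    intro A hA x hx
    obtain ⟨M, hM, hxM⟩ := hP4 A hA x hx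
    obtain ⟨F, G, hF, hMF, huFE, hFE, hG⟩ := hconstit M hM
    exact ⟨M, F, G, hM, hF, hMF, huFE, hFE, hG, hG.2.1 hxM⟩
  have hmin : ∀ T, CFClosed R 𝓕 T → T ⊆ E → (∀ A ∈ 𝒜, A ⊆ T) → s ⊆ T := by
    rintro T hT hTE h𝒜T x ⟨M, F, G, hM, hF, hMF, huFE, hFE, hG, hxG⟩
    obtain ⟨hMfin, hMsub⟩ := hP1 M hM
    have hMT : M ⊆ T := hMsub.trans (sUnion_subset h𝒜T)
    obtain ⟨FT, hFT, hMFT, huFTT, hFTT⟩ := hT M hMfin hMT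
    obtain ⟨F', hF', hKF', huF'E, hF'E⟩ := hE (F ∪ FT)
      ((hCF.2.2.1 F hF).union (hCF.2.2.1 FT hFT))
      (union_subset hFE (hFTT.trans hTE))
    have hFup : upp R F ⊆ upp R F' :=
      upp_subset_upp htrans ((subset_union_left).trans hKF')
    obtain ⟨G', hG'⟩ := hP5 M hM F' hF' (hMF.trans hFup)
    have heq : upp R G = upp R G' := sfam_upp_eq htrans hG hG' hFup
    have hMFT' : upp R M ⊆ upp R FT := upp_subset_upp htrans hMFT
    have hFTF' : upp R FT ⊆ upp R F' :=
      upp_subset_upp htrans ((subset_union_right).trans hKF')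
    have : upp R G' ⊆ upp R FT := hG'.2.2.2 FT hFT hMFT' hFTF'
    exact huFTT (this (heq ▸ hxG))
  refine ⟨s, ?_, hsE, h𝒜s, hmin⟩
  -- CF-closedness of s
  intro K hKfin hKs
  -- choose a constituent for each point of K
  choose Mf Ff Gf hPf hFf hMFf huFEf hFEf hSf hxf using fun x (hx : x ∈ K) => hKs hx
  -- merge the Ms
  have hmerge : ∃ M, P M ∧ ∀ x (hx : x ∈ K), upp R (Mf x hx) ⊆ upp R M := by
    have : ∀ K' : Set U, K'.Finite → K' ⊆ K →
        ∃ M, P M ∧ ∀ x (hx : x ∈ K), x ∈ K' → upp R (Mf x hx) ⊆ upp R M := by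
      intro K' hK'fin
      refine Set.Finite.induction_on (motive := fun K' _ => K' ⊆ K →
        ∃ M, P M ∧ ∀ x (hx : x ∈ K), x ∈ K' → upp R (Mf x hx) ⊆ upp R M) K' hK'fin ?_ ?_
      · intro _
        obtain ⟨M, hM⟩ := hP2
        exact ⟨M, hM, fun x hx hx' => absurd hx' (notMem_empty x)⟩
      · intro a t _ _ ih hsub'
        obtain ⟨M, hM, hMall⟩ := ih ((subset_insert a t).trans hsub')
        have haK : a ∈ K := hsub' (mem_insert a t)
        obtain ⟨M', hM', h1, h2⟩ := hP3 (Mf a haK) M (hPf a haK) hM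
        refine ⟨M', hM', fun x hx hx' => ?_⟩
        rcases mem_insert_iff.1 hx' with h | h
        · subst h
          have : Mf x hx = Mf x haK := rfl
          rw [this]
          exact h1
        · exact (hMall x hx h).trans h2
    obtain ⟨M, hM, hMall⟩ := this K hKfin Subset.rfl
    exact ⟨M, hM, fun x hx => hMall x hx hx⟩
  obtain ⟨M, hM, hMall⟩ := hmerge
  obtain ⟨hMfin, hMsub⟩ := hP1 M hM
  -- enlarge to a big F*
  have hKfin2 : (M ∪ ⋃ x ∈ K, ⋃ (hx : x ∈ K), Ff x hx).Finite := by
    refine hMfin.union ?_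
    refine Set.Finite.biUnion hKfin fun x hx => ?_
    have : (⋃ (hx' : x ∈ K), Ff x hx') = Ff x hx := by
      ext y; simp [hx]
    rw [this]
    exact hCF.2.2.1 _ (hFf x hx)
  have hKsub2 : (M ∪ ⋃ x ∈ K, ⋃ (hx : x ∈ K), Ff x hx) ⊆ E := by
    refine union_subset (hMsub.trans h𝒜E') ?_
    refine iUnion₂_subset fun x hx => iUnion_subset fun hx' => hFEf x hx'
  obtain ⟨Fs, hFs, hKFs, huFsE, hFsE⟩ := hE _ hKfin2 hKsub2
  have hMFs : M ⊆ upp R Fs := (subset_union_left).trans hKFs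
  obtain ⟨Gs, hGs⟩ := hP5 M hM Fs hFs hMFs
  -- every point of K lies in upp R Gs
  have hKG : K ⊆ upp R Gs := by
    intro x hx
    have hFxFs : upp R (Ff x hx) ⊆ upp R Fs := by
      refine upp_subset_upp htrans ?_
      intro y hy
      exact hKFs (Or.inr (mem_biUnion hx (mem_iUnion.2 ⟨hx, hy⟩)))
    obtain ⟨G', hG'⟩ := hP5 (Mf x hx) (hPf x hx) Fs hFs ((hMFf x hx).trans hFxFs)
    have heq : upp R (Gf x hx) = upp R G' := sfam_upp_eq htrans (hSf x hx) hG' hFxFs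
    have : upp R G' ⊆ upp R Gs :=
      hG'.2.2.2 Gs hGs.1 ((hMall x hx).trans hGs.2.1) hGs.2.2.1
    exact this (heq ▸ hxf x hx)
  have hGs_s : upp R Gs ⊆ s :=
    fun y hy => ⟨M, Fs, Gs, hM, hFs, hMFs, huFsE, hFsE, hGs, hy⟩
  exact ⟨Gs, hGs.1, hKG, hGs_s, (subset_upp hrefl Gs).trans hGs_s⟩
end Sup
section Final
variable {U : Type*} {R : U → U → Prop} {𝓕 : Set (Set U)}

lemma cf_sLDomain (hCF : IsCFApprox R 𝓕) (hrefl : Reflexive R)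
    (hsL : IsSLApprox R 𝓕) : IsSLDomain {E : Set U // CFClosed R 𝓕 E} := by
  refine ⟨alg_continuous (cf_algebraic hCF hrefl), ?_⟩
  intro x a b hax hbx
  have hfin : ∀ F ∈ 𝓕, Set.Finite F := hCF.2.2.1
  set P : Set U → Prop := fun M => ∃ F1 F2, F1 ∈ 𝓕 ∧ F1 ⊆ (a : Set U) ∧ F2 ∈ 𝓕 ∧
    F2 ⊆ (b : Set U) ∧ M = F1 ∪ F2 with hP_def
  have hP1 : ∀ M, P M → M.Finite ∧ M ⊆ ⋃₀ {(a : Set U), (b : Set U)} := by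
    rintro M ⟨F1, F2, hF1, hs1, hF2, hs2, rfl⟩
    refine ⟨(hfin F1 hF1).union (hfin F2 hF2), ?_⟩
    rw [sUnion_pair]
    exact union_subset_union hs1 hs2
  have hP2 : ∃ M, P M := by
    obtain ⟨F1, hF1, _, _, hs1⟩ := a.2 ∅ finite_empty (empty_subset _)
    obtain ⟨F2, hF2, _, _, hs2⟩ := b.2 ∅ finite_empty (empty_subset _)
    exact ⟨F1 ∪ F2, F1, F2, hF1, hs1, hF2, hs2, rfl⟩
  have hP3 : ∀ M M', P M → P M' →
      ∃ M'', P M'' ∧ upp R M ⊆ upp R M'' ∧ upp R M' ⊆ upp R M'' := by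
    rintro M M' ⟨F1, F2, hF1, hs1, hF2, hs2, rfl⟩ ⟨F1', F2', hF1', hs1', hF2', hs2', rfl⟩
    obtain ⟨G1, hG1, hK1, hu1, hsub1⟩ := a.2 (F1 ∪ F1')
      ((hfin F1 hF1).union (hfin F1' hF1')) (union_subset hs1 hs1')
    obtain ⟨G2, hG2, hK2, hu2, hsub2⟩ := b.2 (F2 ∪ F2')
      ((hfin F2 hF2).union (hfin F2' hF2')) (union_subset hs2 hs2')
    refine ⟨G1 ∪ G2, ⟨G1, G2, hG1, hsub1, hG2, hsub2, rfl⟩, ?_, ?_⟩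
    · rw [upp_union, upp_union]
      exact union_subset_union
        (upp_subset_upp hCF.1 ((subset_union_left).trans hK1))
        (upp_subset_upp hCF.1 ((subset_union_left).trans hK2))
    · rw [upp_union, upp_union]
      exact union_subset_union
        (upp_subset_upp hCF.1 ((subset_union_right).trans hK1))
        (upp_subset_upp hCF.1 ((subset_union_right).trans hK2))
  have hP4 : ∀ A ∈ ({(a : Set U), (b : Set U)} : Set (Set U)), ∀ x ∈ A,
      ∃ M, P M ∧ x ∈ upp R M := by
    rintro A (rfl | rfl) x hx
    · obtain ⟨F1, hF1, hxF1, _, hs1⟩ := a.2 {x} (finite_singleton x)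
        (singleton_subset_iff.2 hx)
      obtain ⟨F2, hF2, _, _, hs2⟩ := b.2 ∅ finite_empty (empty_subset _)
      refine ⟨F1 ∪ F2, ⟨F1, F2, hF1, hs1, hF2, hs2, rfl⟩, ?_⟩
      rw [upp_union]
      exact Or.inl (hxF1 rfl)
    · obtain ⟨F2, hF2, hxF2, _, hs2⟩ := b.2 {x} (finite_singleton x)
        (singleton_subset_iff.2 hx)
      obtain ⟨F1, hF1, _, _, hs1⟩ := a.2 ∅ finite_empty (empty_subset _)
      refine ⟨F1 ∪ F2, ⟨F1, F2, hF1, hs1, hF2, hs2, rfl⟩, ?_⟩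
      rw [upp_union]
      exact Or.inr (hxF2 rfl)
  have hP5 : ∀ M, P M → ∀ F ∈ 𝓕, M ⊆ upp R F → (SFam R 𝓕 M F).Nonempty := by
    rintro M ⟨F1, F2, hF1, _, hF2, _, rfl⟩ F hF hMF
    refine hsL.2 (F1 ∪ F2) ?_ F hF hMF
    exact ⟨{F1, F2}, by rintro G (rfl | rfl); exacts [hF1, hF2], (finite_singleton F2).insert F1, ⟨F1, mem_insert _ _⟩, (sUnion_pair F1 F2).symm⟩
  obtain ⟨s, hs, hsE, h𝒜s, hmin⟩ := cf_sup_construction hCF hrefl x.2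
    {(a : Set U), (b : Set U)}
    (by rintro A (rfl | rfl); exacts [hax, hbx]) P hP1 hP2 hP3 hP4 hP5
  refine ⟨⟨s, hs⟩, hsE, ?_, ?_, ?_⟩
  · exact h𝒜s _ (mem_insert _ _)
  · exact h𝒜s _ (mem_insert_of_mem _ rfl)
  · intro t htx hat hbt
    exact hmin (t : Set U) t.2 htx (by rintro A (rfl | rfl); exacts [hat, hbt])

lemma cf_LDomain (hCF : IsCFApprox R 𝓕) (hrefl : Reflexive R)
    (hL : IsLApprox R 𝓕) : IsLDomain {E : Set U // CFClosed R 𝓕 E} := by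
  refine ⟨alg_continuous (cf_algebraic hCF hrefl), ?_⟩
  intro x 𝒜' h𝒜'
  have hfin : ∀ F ∈ 𝓕, Set.Finite F := hCF.2.2.1
  set 𝒜 : Set (Set U) := (fun a : {E : Set U // CFClosed R 𝓕 E} => (a : Set U)) '' 𝒜'
    with h𝒜_def
  set P : Set U → Prop := fun M => ∃ 𝓐 : Set (Set U), 𝓐 ⊆ 𝓕 ∧ 𝓐.Finite ∧
    (∀ F ∈ 𝓐, ∃ a ∈ 𝒜', F ⊆ (a : Set U)) ∧ M = ⋃₀ 𝓐 with hP_def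
  have hP1 : ∀ M, P M → M.Finite ∧ M ⊆ ⋃₀ 𝒜 := by
    rintro M ⟨𝓐, h𝓐𝓕, h𝓐fin, h𝓐A, rfl⟩
    refine ⟨Set.Finite.sUnion h𝓐fin (fun F hF => hfin F (h𝓐𝓕 hF)), ?_⟩
    refine sUnion_subset fun F hF => ?_
    obtain ⟨a, ha, hFa⟩ := h𝓐A F hF
    exact hFa.trans (subset_sUnion_of_mem ⟨a, ha, rfl⟩)
  have hP2 : ∃ M, P M :=
    ⟨∅, ∅, empty_subset _, finite_empty, fun F hF => absurd hF (notMem_empty F),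
      sUnion_empty.symm⟩
  have hP3 : ∀ M M', P M → P M' →
      ∃ M'', P M'' ∧ upp R M ⊆ upp R M'' ∧ upp R M' ⊆ upp R M'' := by
    rintro M M' ⟨𝓐, h1, h2, h3, rfl⟩ ⟨𝓐', h1', h2', h3', rfl⟩
    refine ⟨⋃₀ 𝓐 ∪ ⋃₀ 𝓐', ⟨𝓐 ∪ 𝓐', union_subset h1 h1', h2.union h2', ?_,
      (sUnion_union 𝓐 𝓐').symm⟩, upp_mono subset_union_left, upp_mono subset_union_right⟩
    rintro F (hF | hF); exacts [h3 F hF, h3' F hF]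
  have hP4 : ∀ A ∈ 𝒜, ∀ x ∈ A, ∃ M, P M ∧ x ∈ upp R M := by
    rintro A ⟨a, ha, rfl⟩ x hx
    obtain ⟨F1, hF1, hxF1, _, hs1⟩ := a.2 {x} (finite_singleton x)
      (singleton_subset_iff.2 hx)
    refine ⟨F1, ⟨{F1}, singleton_subset_iff.2 hF1, finite_singleton F1,
      ?_, (sUnion_singleton F1).symm⟩, hxF1 rfl⟩
    rintro F rfl
    exact ⟨a, ha, hs1⟩
  have hP5 : ∀ M, P M → ∀ F ∈ 𝓕, M ⊆ upp R F → (SFam R 𝓕 M F).Nonempty := by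
    rintro M ⟨𝓐, h1, h2, h3, rfl⟩ F hF hMF
    refine hL.2 (⋃₀ 𝓐) ?_ F hF hMF
    rcases eq_empty_or_nonempty 𝓐 with rfl | hne
    · right; simp
    · exact Or.inl ⟨𝓐, h1, h2, hne, rfl⟩
  obtain ⟨s, hs, hsE, h𝒜s, hmin⟩ := cf_sup_construction hCF hrefl x.2 𝒜
    (by rintro A ⟨a, ha, rfl⟩; exact h𝒜' a ha) P hP1 hP2 hP3 hP4 hP5
  refine ⟨⟨s, hs⟩, hsE, ?_, ?_⟩
  · intro a ha
    exact h𝒜s (a : Set U) ⟨a, ha, rfl⟩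
  · intro t htx hat
    exact hmin (t : Set U) t.2 htx (by rintro A ⟨a, ha, rfl⟩; exact hat a ha)

end Final
/-- for a topological sL-approximation space (resp. topological
L-approximation space) `(U, R, 𝓕)`, the poset `(𝔠(U, R, 𝓕), ⊆)` is an
algebraic domain that is an sL-domain (resp. an L-domain). -/
theorem stmt13 {U : Type*} (R : U → U → Prop) (𝓕 : Set (Set U))
    (hCF : IsCFApprox R 𝓕) (hrefl : Reflexive R) :
    (IsSLApprox R 𝓕 →
      IsAlgebraicDomain {E : Set U // CFClosed R 𝓕 E} ∧
      IsSLDomain {E : Set U // CFClosed R 𝓕 E}) ∧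
    (IsLApprox R 𝓕 →
      IsAlgebraicDomain {E : Set U // CFClosed R 𝓕 E} ∧
      IsLDomain {E : Set U // CFClosed R 𝓕 E}) :=
  ⟨fun hsL => ⟨cf_algebraic hCF hrefl, cf_sLDomain hCF hrefl hsL⟩,
    fun hL => ⟨cf_algebraic hCF hrefl, cf_LDomain hCF hrefl hL⟩⟩
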